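/- For every rank function f on the subsets of 𝒩 = {1,…,N}, there exists a point x in the polymatroid P_f with ∑_{n=1}^N x_n = f(𝒩). -/

import Mathlib

open Finset

/-- Every polymatroid `P_f` contains a point `x` with `∑_n x_n = f(𝒩)`. -/
theorem quantizedVCG_statement_1 (N : ℕ) (hN : 1 ≤ N)
    (f : Finset (Fin N) → ℝ)
    (hf_norm : f ∅ = 0)
    (hf_mono : ∀ S T : Finset (Fin N), S ⊆ T → f S ≤ f T)
    (hf_sub : ∀ S T : Finset (Fin N), f (S ∩ T) + f (S ∪ T) ≤ f S + f T) :
    ∃ x : Fin N → ℝ,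
      (∀ n, 0 ≤ x n) ∧
      (∀ S : Finset (Fin N), ∑ n ∈ S, x n ≤ f S) ∧
      ∑ n, x n = f Finset.univ := by
  classical
  set g : ℕ → ℝ := fun k => f (univ.filter (fun j : Fin N => (j : ℕ) < k)) with hg
  set x : Fin N → ℝ := fun i => g ((i : ℕ) + 1) - g (i : ℕ) with hx
  have hsubset : ∀ a b : ℕ, a ≤ b →
      (univ.filter (fun j : Fin N => (j : ℕ) < a)) ⊆
      (univ.filter (fun j : Fin N => (j : ℕ) < b)) := by
    intro a b hab j hj
    simp only [mem_filter, mem_univ, true_and] at hj ⊢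
    omega
  have hxnn : ∀ i, 0 ≤ x i := by
    intro i
    exact sub_nonneg.2 (hf_mono _ _ (hsubset _ _ (Nat.le_succ _)))
  have key : ∀ (k : ℕ) (S : Finset (Fin N)), S.card = k → ∑ n ∈ S, x n ≤ f S := by
    intro k
    induction k using Nat.strong_induction_on with
    | _ k ih =>
      intro S hcard
      rcases S.eq_empty_or_nonempty with rfl | hS
      · simp [hf_norm]
      · set m := S.max' hS with hm
        have hmem : m ∈ S := S.max'_mem hS
        have hle : ∀ j ∈ S, j ≤ m := fun j hj => S.le_max' j hj
        set S' := S.erase m with hS'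
        have hcard' : S'.card < k := by
          rw [← hcard]
          exact card_erase_lt_of_mem hmem
        have ihS' : ∑ n ∈ S', x n ≤ f S' := ih _ hcard' S' rfl
        -- submodularity
        have hA : (univ.filter (fun j : Fin N => (j : ℕ) < (m : ℕ))) ∩ S = S' := by
          ext j
          simp only [mem_inter, mem_filter, mem_univ, true_and, hS', mem_erase]
          constructor
          · rintro ⟨hlt, hjS⟩
            refine ⟨fun h => ?_, hjS⟩
            subst h; omega
          · rintro ⟨hne, hjS⟩
            refine ⟨?_, hjS⟩
            have h1 : (j : ℕ) ≤ (m : ℕ) := hle j hjS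
            have hne' : (j : ℕ) ≠ (m : ℕ) := fun h => hne (Fin.ext h)
            omega
        have hB : (univ.filter (fun j : Fin N => (j : ℕ) < (m : ℕ))) ∪ S =
            univ.filter (fun j : Fin N => (j : ℕ) < (m : ℕ) + 1) := by
          ext j
          simp only [mem_union, mem_filter, mem_univ, true_and]
          constructor
          · rintro (h | h)
            · omega
            · have := hle j h
              have : (j : ℕ) ≤ (m : ℕ) := this
              omega
          · intro h
            rcases Nat.lt_or_ge (j : ℕ) (m : ℕ) with h' | h'
            · exact Or.inl h'
            · right
              have : (j : ℕ) = (m : ℕ) := by omega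
              rwa [Fin.ext this]
        have hsub := hf_sub (univ.filter (fun j : Fin N => (j : ℕ) < (m : ℕ))) S
        rw [hA, hB] at hsub
        have hsum : ∑ n ∈ S, x n = x m + ∑ n ∈ S', x n := by
          rw [hS', add_comm]
          exact (Finset.sum_erase_add S x hmem).symm
        rw [hsum]
        have : x m = g ((m : ℕ) + 1) - g (m : ℕ) := rfl
        rw [this]
        simp only [hg] at *
        linarith
  refine ⟨x, hxnn, fun S => key S.card S rfl, ?_⟩
  have h1 : ∑ i : Fin N, x i = ∑ n ∈ Finset.range N, (g (n + 1) - g n) := by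
    rw [Fin.sum_univ_eq_sum_range (fun n => g (n + 1) - g n)]
  rw [h1, Finset.sum_range_sub]
  have hgN : g N = f univ := by
    have : (univ.filter (fun j : Fin N => (j : ℕ) < N)) = univ := by
      apply Finset.filter_true_of_mem
      intro j _
      exact j.isLt
    simp [hg, this]
  have hg0 : g 0 = 0 := by
    have : (univ.filter (fun j : Fin N => (j : ℕ) < 0)) = ∅ := by
      apply Finset.filter_false_of_mem
      intro j _
      omega
    simp [hg, this, hf_norm]
  rw [hgN, hg0, sub_zero]
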